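/- Let f : ℝ → ℝ be strictly increasing, with a single break point at b, one-sided derivatives Df₋(b), Df₊(b) > 0, and C² on each side of b with bounded second derivative. For z1 < b ≤ z2 < z3, writing σ = Df₋(b)/Df₊(b), ζ = (z2-b)/(z2-z1), ξ = (z3-z2)/(z2-z1), one has (f(z2)-f(z1))/(f(z3)-f(z1)) · (z3-z1)/(z2-z1) = ([σ+(1-σ)ζ](1+ξ))/(σ+(1-σ)ζ+ξ) + O(z3-z1), where the implied constant depends only on the bounds for Df, D²f and on σ. -/

import Mathlib

open Set Filter Topology

set_option maxHeartbeats 1000000 in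
theorem increment_ratio_asymptotics_at_break_point
    (f f' f'' : ℝ → ℝ) (b : ℝ)
    (hmono : StrictMono f)
    (c1 c2 M : ℝ) (hc1 : 0 < c1) (hc12 : c1 ≤ c2) (hM : 0 ≤ M)
    (hderiv : ∀ x ≠ b, HasDerivAt f (f' x) x)
    (hderiv2 : ∀ x ≠ b, HasDerivAt f' (f'' x) x)
    (hcont2 : ContinuousOn f'' {x : ℝ | x ≠ b})
    (hbound1 : ∀ x ≠ b, c1 ≤ f' x ∧ f' x ≤ c2)
    (hbound2 : ∀ x ≠ b, |f'' x| ≤ M)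
    (dm dp : ℝ) (hdm : 0 < dm) (hdp : 0 < dp)
    (hleft : HasDerivWithinAt f dm (Set.Iic b) b)
    (hright : HasDerivWithinAt f dp (Set.Ici b) b)
    (σ : ℝ) (hσ : σ = dm / dp) :
    ∃ K > 0, ∀ z1 z2 z3 : ℝ,
      z1 < b → b ≤ z2 → z2 < z3 →
      |(f z2 - f z1) / (f z3 - f z1) * ((z3 - z1) / (z2 - z1)) -
          ((σ + (1 - σ) * ((z2 - b) / (z2 - z1))) * (1 + (z3 - z2) / (z2 - z1))) /
            (σ + (1 - σ) * ((z2 - b) / (z2 - z1)) + (z3 - z2) / (z2 - z1))|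
        ≤ K * (z3 - z1) := by
  -- continuity of f on closed intervals touching b
  have hcontL : ∀ x ≤ b, ContinuousOn f (Icc x b) := by
    intro x hx t ht
    rcases eq_or_lt_of_le ht.2 with h | h
    · subst h
      exact (hleft.continuousWithinAt).mono (fun u hu => hu.2)
    · exact ((hderiv t (ne_of_lt h)).continuousAt).continuousWithinAt
  have hcontR : ∀ x, b ≤ x → ContinuousOn f (Icc b x) := by
    intro x hx t ht
    rcases eq_or_lt_of_le ht.1 with h | h
    · subst h
      exact (hright.continuousWithinAt).mono (fun u hu => hu.1)
    · exact ((hderiv t (ne_of_gt h)).continuousAt).continuousWithinAt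
  -- lower bounds via MVT
  have hlowL : ∀ x y : ℝ, x ≤ y → y ≤ b → c1 * (y - x) ≤ f y - f x := by
    intro x y hxy hyb
    have hxb : x ≤ b := le_trans hxy hyb
    refine (convex_Icc x b).mul_sub_le_image_sub_of_le_deriv (hcontL x hxb) ?_ ?_ x
      ⟨le_refl x, hxb⟩ y ⟨hxy, hyb⟩ hxy
    · intro t ht
      rw [interior_Icc] at ht
      exact ((hderiv t (ne_of_lt ht.2)).differentiableAt).differentiableWithinAt
    · intro t ht
      rw [interior_Icc] at ht
      rw [(hderiv t (ne_of_lt ht.2)).deriv]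
      exact (hbound1 t (ne_of_lt ht.2)).1
  have hlowR : ∀ x y : ℝ, b ≤ x → x ≤ y → c1 * (y - x) ≤ f y - f x := by
    intro x y hbx hxy
    have hby : b ≤ y := le_trans hbx hxy
    refine (convex_Icc b y).mul_sub_le_image_sub_of_le_deriv (hcontR y hby) ?_ ?_ x
      ⟨hbx, hxy⟩ y ⟨hby, le_refl y⟩ hxy
    · intro t ht
      rw [interior_Icc] at ht
      exact ((hderiv t (ne_of_gt ht.1)).differentiableAt).differentiableWithinAt
    · intro t ht
      rw [interior_Icc] at ht
      rw [(hderiv t (ne_of_gt ht.1)).deriv]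
      exact (hbound1 t (ne_of_gt ht.1)).1
  -- f' is Lipschitz on each side
  have hlipL : ∀ x, x < b → ∀ t ∈ Ico x b, |f' t - f' x| ≤ M * (b - x) := by
    intro x hxb t ht
    have key : ∀ u ∈ Ico x b, HasDerivWithinAt f' (f'' u) (Ico x b) u :=
      fun u hu => (hderiv2 u (ne_of_lt hu.2)).hasDerivWithinAt
    have bound : ∀ u ∈ Ico x b, ‖f'' u‖ ≤ M := fun u hu => hbound2 u (ne_of_lt hu.2)
    have h := (convex_Ico x b).norm_image_sub_le_of_norm_hasDerivWithin_le key bound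
      ⟨le_refl x, hxb⟩ ht
    rw [Real.norm_eq_abs, Real.norm_eq_abs] at h
    calc |f' t - f' x| ≤ M * |t - x| := h
      _ ≤ M * (b - x) := by
          apply mul_le_mul_of_nonneg_left _ hM
          rw [abs_of_nonneg (sub_nonneg.2 ht.1)]
          linarith [ht.2]
  have hlipR : ∀ x, b < x → ∀ t ∈ Ioc b x, |f' t - f' x| ≤ M * (x - b) := by
    intro x hbx t ht
    have key : ∀ u ∈ Ioc b x, HasDerivWithinAt f' (f'' u) (Ioc b x) u :=
      fun u hu => (hderiv2 u (ne_of_gt hu.1)).hasDerivWithinAt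
    have bound : ∀ u ∈ Ioc b x, ‖f'' u‖ ≤ M := fun u hu => hbound2 u (ne_of_gt hu.1)
    have h := (convex_Ioc b x).norm_image_sub_le_of_norm_hasDerivWithin_le key bound
      ⟨hbx, le_refl x⟩ ht
    rw [Real.norm_eq_abs, Real.norm_eq_abs] at h
    calc |f' t - f' x| ≤ M * |t - x| := h
      _ ≤ M * (x - b) := by
          apply mul_le_mul_of_nonneg_left _ hM
          rw [abs_sub_comm, abs_of_nonneg (sub_nonneg.2 ht.2)]
          linarith [ht.1]
  -- linearization error on each side, away from b
  have hgL : ∀ x, x < b → ∀ u ∈ Ico x b, ∀ v ∈ Ico x b,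
      |f v - f u - f' x * (v - u)| ≤ M * (b - x) * |v - u| := by
    intro x hxb u hu v hv
    have key : ∀ t ∈ Ico x b,
        HasDerivWithinAt (fun t => f t - f' x * t) (f' t - f' x) (Ico x b) t := by
      intro t ht
      have h1 : HasDerivAt (fun t => f t - f' x * t) (f' t - f' x) t := by
        exact ((hderiv t (ne_of_lt ht.2)).sub ((hasDerivAt_id t).const_mul (f' x))).congr_deriv (by ring)
      exact h1.hasDerivWithinAt
    have bound : ∀ t ∈ Ico x b, ‖f' t - f' x‖ ≤ M * (b - x) := fun t ht => by
      rw [Real.norm_eq_abs]; exact hlipL x hxb t ht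
    have h := (convex_Ico x b).norm_image_sub_le_of_norm_hasDerivWithin_le key bound hu hv
    rw [Real.norm_eq_abs, Real.norm_eq_abs] at h
    have e : f v - f u - f' x * (v - u) = (f v - f' x * v) - (f u - f' x * u) := by ring
    rw [e]; exact h
  have hgR : ∀ x, b < x → ∀ u ∈ Ioc b x, ∀ v ∈ Ioc b x,
      |f v - f u - f' x * (v - u)| ≤ M * (x - b) * |v - u| := by
    intro x hbx u hu v hv
    have key : ∀ t ∈ Ioc b x,
        HasDerivWithinAt (fun t => f t - f' x * t) (f' t - f' x) (Ioc b x) t := by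
      intro t ht
      have h1 : HasDerivAt (fun t => f t - f' x * t) (f' t - f' x) t := by
        exact ((hderiv t (ne_of_gt ht.1)).sub ((hasDerivAt_id t).const_mul (f' x))).congr_deriv (by ring)
      exact h1.hasDerivWithinAt
    have bound : ∀ t ∈ Ioc b x, ‖f' t - f' x‖ ≤ M * (x - b) := fun t ht => by
      rw [Real.norm_eq_abs]; exact hlipR x hbx t ht
    have h := (convex_Ioc b x).norm_image_sub_le_of_norm_hasDerivWithin_le key bound hu hv
    rw [Real.norm_eq_abs, Real.norm_eq_abs] at h
    have e : f v - f u - f' x * (v - u) = (f v - f' x * v) - (f u - f' x * u) := by ring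
    rw [e]; exact h
  -- extend linearization to the endpoint b by a limit argument
  have hfbL : Tendsto f (𝓝[<] b) (𝓝 (f b)) :=
    (hleft.continuousWithinAt).mono_left (nhdsWithin_mono b Iio_subset_Iic_self)
  have hfbR : Tendsto f (𝓝[>] b) (𝓝 (f b)) :=
    (hright.continuousWithinAt).mono_left (nhdsWithin_mono b Ioi_subset_Ici_self)
  have hgLb : ∀ x, x < b → ∀ u ∈ Ico x b,
      |f b - f u - f' x * (b - u)| ≤ M * (b - x) * (b - u) := by
    intro x hxb u hu
    have hcv : Tendsto (fun v => |f v - f u - f' x * (v - u)|) (𝓝[<] b)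
        (𝓝 |f b - f u - f' x * (b - u)|) := by
      apply Tendsto.abs
      have hid : Tendsto (fun v : ℝ => v) (𝓝[<] b) (𝓝 b) :=
        tendsto_id.mono_left nhdsWithin_le_nhds
      exact (hfbL.sub tendsto_const_nhds).sub
        (tendsto_const_nhds.mul (hid.sub tendsto_const_nhds))
    have hbd : Tendsto (fun v : ℝ => M * (b - x) * (v - u)) (𝓝[<] b)
        (𝓝 (M * (b - x) * (b - u))) := by
      have hid : Tendsto (fun v : ℝ => v) (𝓝[<] b) (𝓝 b) :=
        tendsto_id.mono_left nhdsWithin_le_nhds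
      exact tendsto_const_nhds.mul (hid.sub tendsto_const_nhds)
    refine le_of_tendsto_of_tendsto hcv hbd ?_
    filter_upwards [Ioo_mem_nhdsLT hu.2] with v hv
    have h := hgL x hxb u hu v ⟨le_trans hu.1 (le_of_lt hv.1), hv.2⟩
    rwa [abs_of_nonneg (by linarith [hv.1] : (0:ℝ) ≤ v - u)] at h
  have hgRb : ∀ x, b < x → ∀ u ∈ Ioc b x,
      |f u - f b - f' x * (u - b)| ≤ M * (x - b) * (u - b) := by
    intro x hbx u hu
    have hcv : Tendsto (fun v => |f u - f v - f' x * (u - v)|) (𝓝[>] b)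
        (𝓝 |f u - f b - f' x * (u - b)|) := by
      apply Tendsto.abs
      have hid : Tendsto (fun v : ℝ => v) (𝓝[>] b) (𝓝 b) :=
        tendsto_id.mono_left nhdsWithin_le_nhds
      exact (tendsto_const_nhds.sub hfbR).sub
        (tendsto_const_nhds.mul (tendsto_const_nhds.sub hid))
    have hbd : Tendsto (fun v : ℝ => M * (x - b) * (u - v)) (𝓝[>] b)
        (𝓝 (M * (x - b) * (u - b))) := by
      have hid : Tendsto (fun v : ℝ => v) (𝓝[>] b) (𝓝 b) :=
        tendsto_id.mono_left nhdsWithin_le_nhds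
      exact tendsto_const_nhds.mul (tendsto_const_nhds.sub hid)
    refine le_of_tendsto_of_tendsto hcv hbd ?_
    filter_upwards [Ioo_mem_nhdsGT hu.1] with v hv
    have h := hgR x hbx v ⟨hv.1, le_trans (le_of_lt hv.2) hu.2⟩ u hu
    rwa [abs_of_nonneg (by linarith [hv.2] : (0:ℝ) ≤ u - v)] at h
  -- one-sided derivatives are close to f' nearby
  have hdmc : ∀ x, x < b → |dm - f' x| ≤ M * (b - x) := by
    intro x hxb
    have hslope : Tendsto (slope f b) (𝓝[Iic b \ {b}] b) (𝓝 dm) :=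
      hasDerivWithinAt_iff_tendsto_slope.1 hleft
    rw [Iic_diff_right] at hslope
    have habs : Tendsto (fun u => |slope f b u - f' x|) (𝓝[<] b) (𝓝 |dm - f' x|) :=
      (hslope.sub tendsto_const_nhds).abs
    apply le_of_tendsto habs
    filter_upwards [Ioo_mem_nhdsLT hxb] with u hu
    have hub : (0:ℝ) < b - u := by linarith [hu.2]
    have h1 := hgLb x hxb u ⟨le_of_lt hu.1, hu.2⟩
    have e : slope f b u - f' x = (f b - f u - f' x * (b - u)) / (b - u) := by
      have h0 : b - u ≠ 0 := ne_of_gt hub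
      have h0' : u - b ≠ 0 := by intro h; apply h0; linarith [sub_eq_zero.1 h]
      rw [slope_def_field]
      field_simp
      ring
    rw [e, abs_div, abs_of_pos hub, div_le_iff₀ hub]
    calc |f b - f u - f' x * (b - u)| ≤ M * (b - x) * (b - u) := h1
      _ = M * (b - x) * (b - u) := rfl
  have hdpc : ∀ x, b < x → |dp - f' x| ≤ M * (x - b) := by
    intro x hbx
    have hslope : Tendsto (slope f b) (𝓝[Ici b \ {b}] b) (𝓝 dp) :=
      hasDerivWithinAt_iff_tendsto_slope.1 hright
    rw [Ici_sdiff_left] at hslope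
    have habs : Tendsto (fun u => |slope f b u - f' x|) (𝓝[>] b) (𝓝 |dp - f' x|) :=
      (hslope.sub tendsto_const_nhds).abs
    apply le_of_tendsto habs
    filter_upwards [Ioo_mem_nhdsGT hbx] with u hu
    have hub : (0:ℝ) < u - b := by linarith [hu.1]
    have h1 := hgRb x hbx u ⟨hu.1, le_of_lt hu.2⟩
    have e : slope f b u - f' x = (f u - f b - f' x * (u - b)) / (u - b) := by
      have h0 : u - b ≠ 0 := ne_of_gt hub
      rw [slope_def_field]
      field_simp
    rw [e, abs_div, abs_of_pos hub, div_le_iff₀ hub]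
    exact h1
  -- Taylor bounds at b
  have htayL : ∀ x, x < b → |f b - f x - dm * (b - x)| ≤ 2 * M * (b - x) ^ 2 := by
    intro x hxb
    have hbx : (0:ℝ) < b - x := by linarith
    have h1 := hgLb x hxb x ⟨le_refl x, hxb⟩
    have h2 : |(dm - f' x) * (b - x)| ≤ M * (b - x) * (b - x) := by
      rw [abs_mul, abs_of_nonneg (le_of_lt hbx)]
      exact mul_le_mul_of_nonneg_right (hdmc x hxb) (le_of_lt hbx)
    have e : f b - f x - dm * (b - x)
        = (f b - f x - f' x * (b - x)) - (dm - f' x) * (b - x) := by ring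
    rw [e]
    calc |(f b - f x - f' x * (b - x)) - (dm - f' x) * (b - x)|
        ≤ |f b - f x - f' x * (b - x)| + |(dm - f' x) * (b - x)| := abs_sub _ _
      _ ≤ M * (b - x) * (b - x) + M * (b - x) * (b - x) := add_le_add h1 h2
      _ = 2 * M * (b - x) ^ 2 := by ring
  have htayR : ∀ x, b ≤ x → |f x - f b - dp * (x - b)| ≤ 2 * M * (x - b) ^ 2 := by
    intro x hbx
    rcases eq_or_lt_of_le hbx with h | h
    · subst h; simp
    · have hxb : (0:ℝ) < x - b := by linarith
      have h1 := hgRb x h x ⟨h, le_refl x⟩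
      have h2 : |(dp - f' x) * (x - b)| ≤ M * (x - b) * (x - b) := by
        rw [abs_mul, abs_of_nonneg (le_of_lt hxb)]
        exact mul_le_mul_of_nonneg_right (hdpc x h) (le_of_lt hxb)
      have e : f x - f b - dp * (x - b)
          = (f x - f b - f' x * (x - b)) - (dp - f' x) * (x - b) := by ring
      rw [e]
      calc |(f x - f b - f' x * (x - b)) - (dp - f' x) * (x - b)|
          ≤ |f x - f b - f' x * (x - b)| + |(dp - f' x) * (x - b)| := abs_sub _ _
        _ ≤ M * (x - b) * (x - b) + M * (x - b) * (x - b) := add_le_add h1 h2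
        _ = 2 * M * (x - b) ^ 2 := by ring
  -- main part
  have hDmin : (0:ℝ) < min dm dp := lt_min hdm hdp
  have hDmax : (0:ℝ) < max dm dp := lt_of_lt_of_le hdm (le_max_left _ _)
  have hKnn : (0:ℝ) ≤ 4 * M * max dm dp / (c1 * min dm dp) := by
    apply div_nonneg
    · nlinarith
    · nlinarith
  refine ⟨4 * M * max dm dp / (c1 * min dm dp) + 1, by linarith, ?_⟩
  intro z1 z2 z3 h1 h2 h3
  have hbz1 : (0:ℝ) < b - z1 := by linarith
  have hz2b : (0:ℝ) ≤ z2 - b := by linarith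
  have hz3b : (0:ℝ) < z3 - b := by linarith
  have hz21 : (0:ℝ) < z2 - z1 := by linarith
  have hz31 : (0:ℝ) < z3 - z1 := by linarith
  have hz2131 : z2 - z1 ≤ z3 - z1 := by linarith
  obtain ⟨A, hA⟩ : ∃ A, A = dm * (b - z1) + dp * (z2 - b) := ⟨_, rfl⟩
  obtain ⟨B, hB⟩ : ∃ B, B = dm * (b - z1) + dp * (z3 - b) := ⟨_, rfl⟩
  have hApos : 0 < A := by rw [hA]; positivity
  have hBpos : 0 < B := by rw [hB]; positivity
  have hAhi : A ≤ max dm dp * (z2 - z1) := by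
    rw [hA]; nlinarith [le_max_left dm dp, le_max_right dm dp]
  have hBlo : min dm dp * (z3 - z1) ≤ B := by
    rw [hB]; nlinarith [min_le_left dm dp, min_le_right dm dp]
  have hBhi : B ≤ max dm dp * (z3 - z1) := by
    rw [hB]; nlinarith [le_max_left dm dp, le_max_right dm dp]
  have hF3 : c1 * (z3 - z1) ≤ f z3 - f z1 := by
    have l1 := hlowL z1 b (le_of_lt h1) le_rfl
    have l2 := hlowR b z3 le_rfl (by linarith)
    linarith
  have hF3pos : 0 < f z3 - f z1 := by nlinarith
  -- error bounds
  have he2 : |f z2 - f z1 - A| ≤ 2 * M * (z2 - z1) ^ 2 := by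
    have t1 := htayL z1 h1
    have t2 := htayR z2 h2
    have e : f z2 - f z1 - A
        = (f z2 - f b - dp * (z2 - b)) + (f b - f z1 - dm * (b - z1)) := by
      rw [hA]; ring
    rw [e]
    calc |(f z2 - f b - dp * (z2 - b)) + (f b - f z1 - dm * (b - z1))|
        ≤ |f z2 - f b - dp * (z2 - b)| + |f b - f z1 - dm * (b - z1)| := abs_add_le _ _
      _ ≤ 2 * M * (z2 - b) ^ 2 + 2 * M * (b - z1) ^ 2 := add_le_add t2 t1
      _ ≤ 2 * M * (z2 - z1) ^ 2 := by
          have e2 : 2 * M * (z2 - z1) ^ 2 - (2 * M * (z2 - b) ^ 2 + 2 * M * (b - z1) ^ 2)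
              = 4 * (M * ((z2 - b) * (b - z1))) := by ring
          have := mul_nonneg hM (mul_nonneg hz2b (le_of_lt hbz1))
          linarith
  have he3 : |f z3 - f z1 - B| ≤ 2 * M * (z3 - z1) ^ 2 := by
    have t1 := htayL z1 h1
    have t2 := htayR z3 (by linarith)
    have e : f z3 - f z1 - B
        = (f z3 - f b - dp * (z3 - b)) + (f b - f z1 - dm * (b - z1)) := by
      rw [hB]; ring
    rw [e]
    calc |(f z3 - f b - dp * (z3 - b)) + (f b - f z1 - dm * (b - z1))|
        ≤ |f z3 - f b - dp * (z3 - b)| + |f b - f z1 - dm * (b - z1)| := abs_add_le _ _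
      _ ≤ 2 * M * (z3 - b) ^ 2 + 2 * M * (b - z1) ^ 2 := add_le_add t2 t1
      _ ≤ 2 * M * (z3 - z1) ^ 2 := by
          have e2 : 2 * M * (z3 - z1) ^ 2 - (2 * M * (z3 - b) ^ 2 + 2 * M * (b - z1) ^ 2)
              = 4 * (M * ((z3 - b) * (b - z1))) := by ring
          have := mul_nonneg hM (mul_nonneg (le_of_lt hz3b) (le_of_lt hbz1))
          linarith
  -- exact identity for the model term
  have hid : ((σ + (1 - σ) * ((z2 - b) / (z2 - z1))) * (1 + (z3 - z2) / (z2 - z1))) /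
        (σ + (1 - σ) * ((z2 - b) / (z2 - z1)) + (z3 - z2) / (z2 - z1))
      = A * (z3 - z1) / (B * (z2 - z1)) := by
    have hden : σ + (1 - σ) * ((z2 - b) / (z2 - z1)) + (z3 - z2) / (z2 - z1)
        = B / (dp * (z2 - z1)) := by
      rw [hσ, hB]; field_simp; ring
    have hnum : σ + (1 - σ) * ((z2 - b) / (z2 - z1)) = A / (dp * (z2 - z1)) := by
      rw [hσ, hA]; field_simp; ring
    rw [hden, hnum]
    have h0 : dp * (z2 - z1) ≠ 0 := by positivity
    have hBne : B ≠ 0 := ne_of_gt hBpos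
    have hz21ne : z2 - z1 ≠ 0 := ne_of_gt hz21
    field_simp
    ring
  rw [hid]
  have key : (f z2 - f z1) / (f z3 - f z1) * ((z3 - z1) / (z2 - z1)) -
        A * (z3 - z1) / (B * (z2 - z1))
      = ((f z2 - f z1 - A) * B - A * (f z3 - f z1 - B)) * (z3 - z1) /
        ((f z3 - f z1) * B * (z2 - z1)) := by
    have hF3ne : f z3 - f z1 ≠ 0 := ne_of_gt hF3pos
    have hBne : B ≠ 0 := ne_of_gt hBpos
    have hz21ne : z2 - z1 ≠ 0 := ne_of_gt hz21
    field_simp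
    ring
  rw [key]
  have hDpos : 0 < (f z3 - f z1) * B * (z2 - z1) := by positivity
  rw [abs_div, abs_of_pos hDpos, abs_mul, abs_of_pos hz31, div_le_iff₀ hDpos]
  have hN : |(f z2 - f z1 - A) * B - A * (f z3 - f z1 - B)|
      ≤ 4 * M * max dm dp * (z2 - z1) * (z3 - z1) ^ 2 := by
    calc |(f z2 - f z1 - A) * B - A * (f z3 - f z1 - B)|
        ≤ |(f z2 - f z1 - A) * B| + |A * (f z3 - f z1 - B)| := abs_sub _ _
      _ = |f z2 - f z1 - A| * B + A * |f z3 - f z1 - B| := by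
          rw [abs_mul, abs_mul, abs_of_pos hBpos, abs_of_pos hApos]
      _ ≤ 2 * M * (z2 - z1) ^ 2 * (max dm dp * (z3 - z1))
          + max dm dp * (z2 - z1) * (2 * M * (z3 - z1) ^ 2) := by
          apply add_le_add
          · apply mul_le_mul he2 hBhi (le_of_lt hBpos) (by positivity)
          · apply mul_le_mul hAhi he3 (abs_nonneg _) (by positivity)
      _ ≤ 4 * M * max dm dp * (z2 - z1) * (z3 - z1) ^ 2 := by
          have hd : 4 * M * max dm dp * (z2 - z1) * (z3 - z1) ^ 2
              - (2 * M * (z2 - z1) ^ 2 * (max dm dp * (z3 - z1))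
                + max dm dp * (z2 - z1) * (2 * M * (z3 - z1) ^ 2))
              = 2 * (M * (max dm dp * ((z2 - z1) * ((z3 - z1) * ((z3 - z1) - (z2 - z1)))))) := by
            ring
          have hnn : (0:ℝ) ≤ 2 * (M * (max dm dp * ((z2 - z1) * ((z3 - z1) * ((z3 - z1) - (z2 - z1)))))) := by
            have : (0:ℝ) ≤ (z3 - z1) - (z2 - z1) := by linarith
            positivity
          linarith
  -- final numeric estimate
  have hDlo : c1 * min dm dp * (z3 - z1) ^ 2 * (z2 - z1) ≤ (f z3 - f z1) * B * (z2 - z1) := by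
    have h5 : c1 * (z3 - z1) * (min dm dp * (z3 - z1)) ≤ (f z3 - f z1) * B :=
      mul_le_mul hF3 hBlo (by positivity) (le_of_lt hF3pos)
    nlinarith
  have hK : 4 * M * max dm dp ≤ (4 * M * max dm dp / (c1 * min dm dp) + 1) * (c1 * min dm dp) := by
    rw [add_mul, div_mul_cancel₀]
    · nlinarith
    · positivity
  nlinarith [mul_le_mul_of_nonneg_right hN (le_of_lt hz31),
    mul_le_mul_of_nonneg_right hDlo (mul_nonneg (by linarith [hKnn] : (0:ℝ) ≤ 4 * M * max dm dp / (c1 * min dm dp) + 1) (le_of_lt hz31)),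
    mul_le_mul_of_nonneg_right hK (by positivity : (0:ℝ) ≤ (z3 - z1)^3 * (z2 - z1))]
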